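/- Let n ≥ 1, pᵢ ∈ [0,1] with pₙ = 1, sᵢ ∈ [0,1] for i = 2,…,n+1 with s_{n+1} = 1, aᵢ > 0, rᵢ ∈ [0, min(qᵢ, cᵢaᵢ)) for i = 2,…,n, cᵢ ∈ (0,1], qᵢ > 0, and fᵢ : [0,aᵢ] → ℝ≥0 satisfying Assumption (H) (in particular fᵢ(z) ≥ θᵢz for some θᵢ > 0). Suppose the sᵢ are given by the supply-priority formula (2.8) with uᵢ ∈ [0,rᵢ] and dᵢ ∈ [0,1]. Then there exists C > 0 such that Σ_{i=1}^n (1 + pᵢ(n−i)) s_{i+1} fᵢ(xᵢ) ≥ C Σ_{i=1}^n (n+1−i) xᵢ for all x ∈ (0,a₁]×…×(0,aₙ]. -/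

import Mathlib

set_option maxHeartbeats 1000000


open Set Finset

theorem stmt_12 (n : ℕ) (hn : 1 ≤ n)
    (a c q r p δ θ : ℕ → ℝ) (f : ℕ → ℝ → ℝ)
    (ha : ∀ i ∈ Finset.Icc 1 n, 0 < a i)
    (hc : ∀ i ∈ Finset.Icc 2 n, c i ∈ Ioc (0:ℝ) 1)
    (hq : ∀ i ∈ Finset.Icc 2 n, 0 < q i)
    (hr : ∀ i ∈ Finset.Icc 2 n, r i ∈ Ico 0 (min (q i) (c i * a i)))
    (hp : ∀ i ∈ Finset.Icc 1 (n - 1), p i ∈ Ico (0:ℝ) 1)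
    (hpn : p n = 1)
    -- Assumption (H) for each cell
    (hδ : ∀ i ∈ Finset.Icc 1 n, δ i ∈ Ioc 0 (a i))
    (hcont : ∀ i ∈ Finset.Icc 1 n, ContinuousOn (f i) (Icc 0 (a i)))
    (hposf : ∀ i ∈ Finset.Icc 1 n, ∀ z ∈ Ioc 0 (a i), 0 < f i z ∧ f i z < z)
    (hinc : ∀ i ∈ Finset.Icc 1 n, StrictMonoOn (f i) (Icc 0 (δ i)))
    (hdec : ∀ i ∈ Finset.Icc 1 n, AntitoneOn (f i) (Icc (δ i) (a i)))
    (hθ : ∀ i ∈ Finset.Icc 1 n, 0 < θ i)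
    (hθf : ∀ i ∈ Finset.Icc 1 n, ∀ z ∈ Icc 0 (a i), θ i * z ≤ f i z) :
    ∃ C > 0, ∀ x u d s : ℕ → ℝ,
      (∀ i ∈ Finset.Icc 1 n, x i ∈ Ioc 0 (a i)) →
      (∀ i ∈ Finset.Icc 2 n, u i ∈ Icc 0 (r i)) →
      (∀ i ∈ Finset.Icc 2 n, d i ∈ Icc (0:ℝ) 1) →
      (∀ i ∈ Finset.Icc 2 n, s i =
        (1 - d i) * min 1 (max 0 ((min (q i) (c i * (a i - x i)) - u i)
            / ((1 - p (i - 1)) * f (i - 1) (x (i - 1)))))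
          + d i * min 1 (min (q i) (c i * (a i - x i))
            / ((1 - p (i - 1)) * f (i - 1) (x (i - 1))))) →
      s (n + 1) = 1 →
      (∑ i ∈ Finset.Icc 1 n, (1 + p i * ((n : ℝ) - (i : ℝ))) * s (i + 1) * f i (x i))
        ≥ C * ∑ i ∈ Finset.Icc 1 n, ((n : ℝ) + 1 - (i : ℝ)) * x i := by
  classical
  have hne : (Finset.Icc 1 n).Nonempty := ⟨1, by simp [hn]⟩
  -- minimum of the θ's
  set θm : ℝ := (Finset.Icc 1 n).inf' hne θ with hθm
  have hθmpos : 0 < θm := by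
    rw [hθm, Finset.lt_inf'_iff]
    exact fun b hb => hθ b hb
  have hθmle : ∀ i ∈ Finset.Icc 1 n, θm ≤ θ i := fun i hi => Finset.inf'_le _ hi
  -- positive gaps
  have hgap : ∀ j ∈ Finset.Icc 2 n, 0 < min (q j) (c j * a j) - r j := by
    intro j hj
    have h := hr j hj
    rw [Set.mem_Ico] at h
    linarith [h.2]
  -- the threshold ε
  set E : Finset ℝ := insert ((1:ℝ)/2) ((Finset.Icc 2 n).image
      (fun j => (min (q j) (c j * a j) - r j) / (2 * a (j - 1)))) with hE
  set ε : ℝ := E.min' (Finset.insert_nonempty _ _) with hεdef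
  have hεpos : 0 < ε := by
    rw [hεdef, Finset.lt_min'_iff]
    intro y hy
    rw [hE, Finset.mem_insert] at hy
    rcases hy with hy | hy
    · rw [hy]; norm_num
    · rw [Finset.mem_image] at hy
      obtain ⟨j, hj, rfl⟩ := hy
      have hj1 : j - 1 ∈ Finset.Icc 1 n := by
        simp only [Finset.mem_Icc] at hj ⊢; omega
      have := ha (j - 1) hj1
      exact div_pos (hgap j hj) (by linarith)
  have hεhalf : ε ≤ 1/2 :=
    Finset.min'_le _ _ (Finset.mem_insert_self _ _)
  have hεle : ∀ j ∈ Finset.Icc 2 n,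
      ε ≤ (min (q j) (c j * a j) - r j) / (2 * a (j - 1)) := by
    intro j hj
    exact Finset.min'_le _ _ (Finset.mem_insert_of_mem (Finset.mem_image_of_mem _ hj))
  -- the ratio bound ρ
  set R : Finset ℝ := insert ((1:ℝ)) ((Finset.Icc 2 n).image
      (fun j => 2 * a (j - 1) / (min (q j) (c j * a j) - r j))) with hR
  set ρ : ℝ := R.max' (Finset.insert_nonempty _ _) with hρdef
  have hρ1 : (1:ℝ) ≤ ρ := Finset.le_max' _ _ (Finset.mem_insert_self _ _)
  have hρpos : (0:ℝ) < ρ := by linarith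
  have hρle : ∀ j ∈ Finset.Icc 2 n,
      2 * a (j - 1) / (min (q j) (c j * a j) - r j) ≤ ρ := by
    intro j hj
    exact Finset.le_max' R _ (Finset.mem_insert_of_mem (Finset.mem_image_of_mem _ hj))
  -- the constants
  have hρnpos : (0:ℝ) < ρ ^ n := by positivity
  set C0 : ℝ := ε * θm / ρ ^ n with hC0
  have hC0pos : 0 < C0 := by
    rw [hC0]; positivity
  have hnpos : (0:ℝ) < (n:ℝ) := by exact_mod_cast hn
  refine ⟨C0 / ((n:ℝ) * n), by positivity, ?_⟩
  intro x u d s hx hu hd hs hsn1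
  -- basic positivity facts
  have hsnn : ∀ j ∈ Finset.Icc 2 n, 0 ≤ s j := by
    intro j hj
    have hjm : j - 1 ∈ Finset.Icc 1 n := by
      simp only [Finset.mem_Icc] at hj ⊢; omega
    have hjm' : j - 1 ∈ Finset.Icc 1 (n - 1) := by
      simp only [Finset.mem_Icc] at hj ⊢; omega
    have hxj1 := hx (j - 1) hjm
    rw [Set.mem_Ioc] at hxj1
    have hfj1 := hposf (j - 1) hjm (x (j - 1)) (Set.mem_Ioc.2 hxj1)
    have hpj1 := hp (j - 1) hjm'
    rw [Set.mem_Ico] at hpj1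
    have hD : 0 < (1 - p (j - 1)) * f (j - 1) (x (j - 1)) :=
      mul_pos (by linarith [hpj1.2]) hfj1.1
    have hxj := hx j (by simp only [Finset.mem_Icc] at hj ⊢; omega)
    rw [Set.mem_Ioc] at hxj
    have hM0 : 0 ≤ min (q j) (c j * (a j - x j)) :=
      le_min (hq j hj).le
        (mul_nonneg (hc j hj).1.le (by linarith [hxj.2]))
    have hdj := hd j hj
    rw [Set.mem_Icc] at hdj
    rw [hs j hj]
    have hA : (0:ℝ) ≤ min 1 (max 0 ((min (q j) (c j * (a j - x j)) - u j)
        / ((1 - p (j - 1)) * f (j - 1) (x (j - 1))))) :=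
      le_min zero_le_one (le_max_left _ _)
    have hB : (0:ℝ) ≤ min 1 (min (q j) (c j * (a j - x j))
        / ((1 - p (j - 1)) * f (j - 1) (x (j - 1)))) :=
      le_min zero_le_one (div_nonneg hM0 hD.le)
    exact add_nonneg (mul_nonneg (by linarith [hdj.2]) hA) (mul_nonneg hdj.1 hB)
  have hs' : ∀ j ∈ Finset.Icc 1 n, 0 ≤ s (j + 1) := by
    intro j hj
    simp only [Finset.mem_Icc] at hj
    rcases eq_or_lt_of_le hj.2 with hjn | hjn
    · rw [hjn, hsn1]; norm_num
    · exact hsnn (j + 1) (by simp only [Finset.mem_Icc]; omega)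
  have hwle : ∀ j ∈ Finset.Icc 1 n, (1:ℝ) ≤ 1 + p j * ((n:ℝ) - (j:ℝ)) := by
    intro j hj
    simp only [Finset.mem_Icc] at hj
    have hpj : 0 ≤ p j := by
      rcases eq_or_lt_of_le hj.2 with hjn | hjn
      · rw [hjn, hpn]; norm_num
      · exact (Set.mem_Ico.1 (hp j (by simp only [Finset.mem_Icc]; omega))).1
    have hcast : (j:ℝ) ≤ (n:ℝ) := by exact_mod_cast hj.2
    have := mul_nonneg hpj (by linarith : (0:ℝ) ≤ (n:ℝ) - (j:ℝ))
    linarith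
  have hTnn : ∀ j ∈ Finset.Icc 1 n,
      0 ≤ (1 + p j * ((n:ℝ) - (j:ℝ))) * s (j + 1) * f j (x j) := by
    intro j hj
    have hxj := hx j hj
    rw [Set.mem_Ioc] at hxj
    have hfj := (hposf j hj (x j) (Set.mem_Ioc.2 hxj)).1
    exact mul_nonneg (mul_nonneg (by linarith [hwle j hj]) (hs' j hj)) hfj.le
  -- key dichotomy
  have key : ∀ i, 1 ≤ i → i + 1 ≤ n →
      ε ≤ s (i + 1) ∨
      (min (q (i + 1)) (c (i + 1) * a (i + 1)) - r (i + 1)) / 2 ≤ x (i + 1) := by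
    intro i h1 h2
    by_cases hcase : ε ≤ s (i + 1)
    · exact Or.inl hcase
    push_neg at hcase
    right
    have hj : i + 1 ∈ Finset.Icc 2 n := by simp only [Finset.mem_Icc]; omega
    have hi1 : i ∈ Finset.Icc 1 n := by simp only [Finset.mem_Icc]; omega
    have hi1' : i ∈ Finset.Icc 1 (n - 1) := by simp only [Finset.mem_Icc]; omega
    have hxi := hx i hi1
    rw [Set.mem_Ioc] at hxi
    have hxj := hx (i + 1) (by simp only [Finset.mem_Icc]; omega)
    rw [Set.mem_Ioc] at hxj
    have hfi := hposf i hi1 (x i) (Set.mem_Ioc.2 hxi)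
    have hpi := hp i hi1'
    rw [Set.mem_Ico] at hpi
    have hcj := hc (i + 1) hj
    rw [Set.mem_Ioc] at hcj
    have hqj := hq (i + 1) hj
    have hrj := hr (i + 1) hj
    rw [Set.mem_Ico] at hrj
    have huj := hu (i + 1) hj
    rw [Set.mem_Icc] at huj
    have hdj := hd (i + 1) hj
    rw [Set.mem_Icc] at hdj
    have hsval := hs (i + 1) hj
    simp only [Nat.add_sub_cancel] at hsval
    set D : ℝ := (1 - p i) * f i (x i) with hDdef
    set M : ℝ := min (q (i + 1)) (c (i + 1) * (a (i + 1) - x (i + 1))) with hMdef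
    have hDpos : 0 < D := mul_pos (by linarith [hpi.2]) hfi.1
    have hM0 : 0 ≤ M := le_min hqj.le (mul_nonneg hcj.1.le (by linarith [hxj.2]))
    -- lower bound for s (i+1)
    have h1' : min 1 ((M - u (i + 1)) / D) ≤ min 1 (max 0 ((M - u (i + 1)) / D)) :=
      min_le_min le_rfl (le_max_right _ _)
    have h2' : min 1 ((M - u (i + 1)) / D) ≤ min 1 (M / D) := by
      refine min_le_min le_rfl ?_
      gcongr
      linarith [huj.1]
    have hlb : min 1 ((M - u (i + 1)) / D) ≤ s (i + 1) := by
      rw [hsval]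
      have e1 := mul_le_mul_of_nonneg_left h1' (by linarith [hdj.2] : 0 ≤ 1 - d (i + 1))
      have e2 := mul_le_mul_of_nonneg_left h2' hdj.1
      have e3 : (1 - d (i + 1)) * min 1 ((M - u (i + 1)) / D)
          + d (i + 1) * min 1 ((M - u (i + 1)) / D)
          = min 1 ((M - u (i + 1)) / D) := by ring
      linarith
    have hslt1 : s (i + 1) < 1 := by linarith [hεhalf]
    have hdiv : (M - u (i + 1)) / D ≤ s (i + 1) := by
      rcases min_cases (1:ℝ) ((M - u (i + 1)) / D) with ⟨heq, hle⟩ | ⟨heq, hle⟩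
      · exfalso; rw [heq] at hlb; linarith
      · rw [heq] at hlb; exact hlb
    have hMle : M ≤ u (i + 1) + s (i + 1) * D := by
      rw [div_le_iff₀ hDpos] at hdiv
      linarith
    have hDle : D < a i := by
      have h5 : (1 - p i) * f i (x i) ≤ 1 * f i (x i) :=
        mul_le_mul_of_nonneg_right (by linarith [hpi.1]) hfi.1.le
      rw [hDdef]
      linarith [hfi.2, hxi.2]
    have hsnni : 0 ≤ s (i + 1) := hsnn (i + 1) hj
    have hεa := hεle (i + 1) hj
    simp only [Nat.add_sub_cancel] at hεa
    have hai := ha i hi1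
    have hεa2 : ε * a i ≤ (min (q (i + 1)) (c (i + 1) * a (i + 1)) - r (i + 1)) / 2 := by
      rw [le_div_iff₀ (by linarith : (0:ℝ) < 2 * a i)] at hεa
      linarith
    set m : ℝ := min (q (i + 1)) (c (i + 1) * a (i + 1)) with hmdef
    have hgapj := hgap (i + 1) hj
    have hMlt : M ≤ r (i + 1) + (m - r (i + 1)) / 2 := by
      have hsD : s (i + 1) * D ≤ ε * a i := by
        have t1 : s (i + 1) * D ≤ ε * D :=
          mul_le_mul_of_nonneg_right hcase.le hDpos.le
        have t2 : ε * D ≤ ε * a i :=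
          mul_le_mul_of_nonneg_left hDle.le hεpos.le
        linarith
      calc M ≤ u (i + 1) + s (i + 1) * D := hMle
        _ ≤ r (i + 1) + ε * a i := by linarith [huj.2]
        _ ≤ r (i + 1) + (m - r (i + 1)) / 2 := by linarith [hεa2]
    have hmq : m ≤ q (i + 1) := min_le_left _ _
    have hmca : m ≤ c (i + 1) * a (i + 1) := min_le_right _ _
    rcases le_or_gt (q (i + 1)) (c (i + 1) * (a (i + 1) - x (i + 1))) with hcs | hcs
    · exfalso
      have : M = q (i + 1) := min_eq_left hcs
      rw [this] at hMlt
      linarith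
    · have hMeq : M = c (i + 1) * (a (i + 1) - x (i + 1)) := min_eq_right hcs.le
      rw [hMeq] at hMlt
      have hexp : c (i + 1) * (a (i + 1) - x (i + 1))
          = c (i + 1) * a (i + 1) - c (i + 1) * x (i + 1) := by ring
      have hcx : c (i + 1) * x (i + 1) ≤ 1 * x (i + 1) :=
        mul_le_mul_of_nonneg_right hcj.2 hxj.1.le
      linarith [hmca]
  -- main downward induction
  have main : ∀ k, ∀ i, n = i + k → 1 ≤ i →
      ε * θm / ρ ^ k * x i ≤
        ∑ j ∈ Finset.Icc i n, (1 + p j * ((n:ℝ) - (j:ℝ))) * s (j + 1) * f j (x j) := by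
    intro k
    induction k with
    | zero =>
      intro i hik h1
      have hin : i = n := by omega
      subst hin
      rw [Finset.Icc_self, Finset.sum_singleton, hsn1]
      have hinmem : i ∈ Finset.Icc 1 i := by simp only [Finset.mem_Icc]; omega
      have hxn := hx i hinmem
      rw [Set.mem_Ioc] at hxn
      have hθn := hθf i hinmem (x i) (Set.mem_Icc.2 ⟨hxn.1.le, hxn.2⟩)
      have hθmn := hθmle i hinmem
      have hcast : ((i:ℝ) - (i:ℝ)) = 0 := by ring
      rw [pow_zero]
      have heq : (1 + p i * ((i:ℝ) - (i:ℝ))) * 1 * f i (x i) = f i (x i) := by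
        rw [hcast]; ring
      rw [heq]
      have hε1 : ε ≤ 1 := by linarith
      have t1 : ε * θm ≤ θm := mul_le_of_le_one_left hθmpos.le hε1
      have t1' := mul_le_mul_of_nonneg_right t1 hxn.1.le
      have t2 := mul_le_mul_of_nonneg_right hθmn hxn.1.le
      rw [div_one]
      linarith [hθn]
    | succ k ih =>
      intro i hik h1
      have h2 : i + 1 ≤ n := by omega
      have hsplit : Finset.Icc i n = insert i (Finset.Icc (i + 1) n) := by
        ext j
        simp only [Finset.mem_Icc, Finset.mem_insert]
        omega
      rw [hsplit, Finset.sum_insert (by simp only [Finset.mem_Icc]; omega)]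
      have hrest := ih (i + 1) (by omega) (by omega)
      have hrestnn : 0 ≤ ∑ j ∈ Finset.Icc (i + 1) n,
          (1 + p j * ((n:ℝ) - (j:ℝ))) * s (j + 1) * f j (x j) :=
        Finset.sum_nonneg fun j hj => hTnn j (by
          simp only [Finset.mem_Icc] at hj ⊢; omega)
      have hi1 : i ∈ Finset.Icc 1 n := by simp only [Finset.mem_Icc]; omega
      have hxi := hx i hi1
      rw [Set.mem_Ioc] at hxi
      have hfi := hposf i hi1 (x i) (Set.mem_Ioc.2 hxi)
      have hTinn := hTnn i hi1
      have hρk : (0:ℝ) < ρ ^ k := by positivity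
      have hρk1 : (0:ℝ) < ρ ^ (k + 1) := by positivity
      have hρk1ge : (1:ℝ) ≤ ρ ^ (k + 1) := by
        calc (1:ℝ) = 1 ^ (k + 1) := (one_pow _).symm
          _ ≤ ρ ^ (k + 1) := pow_le_pow_left₀ zero_le_one hρ1 _
      rcases key i h1 h2 with hks | hkx
      · -- s (i+1) is at least ε : the i-th term suffices
        have hθi := hθf i hi1 (x i) (Set.mem_Icc.2 ⟨hxi.1.le, hxi.2⟩)
        have hθmi := hθmle i hi1
        have hw := hwle i hi1
        have hfge : θm * x i ≤ f i (x i) := by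
          have := mul_le_mul_of_nonneg_right hθmi hxi.1.le
          linarith [hθi]
        have hfnn : 0 ≤ f i (x i) := hfi.1.le
        have hterm : ε * θm * x i ≤
            (1 + p i * ((n:ℝ) - (i:ℝ))) * s (i + 1) * f i (x i) := by
          have t1 : ε * (θm * x i) ≤ ε * f i (x i) :=
            mul_le_mul_of_nonneg_left hfge hεpos.le
          have t2 : ε * f i (x i) ≤ s (i + 1) * f i (x i) :=
            mul_le_mul_of_nonneg_right hks hfnn
          have t3 : 1 * (s (i + 1) * f i (x i)) ≤
              (1 + p i * ((n:ℝ) - (i:ℝ))) * (s (i + 1) * f i (x i)) :=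
            mul_le_mul_of_nonneg_right hw (mul_nonneg (hs' i hi1) hfnn)
          have e1 : ε * (θm * x i) = ε * θm * x i := by ring
          have e2 : (1 + p i * ((n:ℝ) - (i:ℝ))) * (s (i + 1) * f i (x i))
              = (1 + p i * ((n:ℝ) - (i:ℝ))) * s (i + 1) * f i (x i) := by ring
          linarith
        have hshr : ε * θm / ρ ^ (k + 1) * x i ≤ ε * θm * x i := by
          have hd1 : ε * θm / ρ ^ (k + 1) ≤ ε * θm :=
            div_le_self (by positivity) hρk1ge
          exact mul_le_mul_of_nonneg_right hd1 hxi.1.le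
        linarith
      · -- cascade : x (i+1) is bounded below
        have hj : i + 1 ∈ Finset.Icc 2 n := by simp only [Finset.mem_Icc]; omega
        have hρj := hρle (i + 1) hj
        simp only [Nat.add_sub_cancel] at hρj
        have hgapj := hgap (i + 1) hj
        have hai := ha i hi1
        have hxip : x i ≤ ρ * x (i + 1) := by
          rw [div_le_iff₀ hgapj] at hρj
          have hxj := hx (i + 1) (by simp only [Finset.mem_Icc]; omega)
          rw [Set.mem_Ioc] at hxj
          have t1 : ρ * ((min (q (i + 1)) (c (i + 1) * a (i + 1)) - r (i + 1)) / 2)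
              ≤ ρ * x (i + 1) := mul_le_mul_of_nonneg_left hkx hρpos.le
          have t2 : ρ * ((min (q (i + 1)) (c (i + 1) * a (i + 1)) - r (i + 1)) / 2) * 2
              = ρ * (min (q (i + 1)) (c (i + 1) * a (i + 1)) - r (i + 1)) := by ring
          linarith [hxi.2]
        have hstep : ε * θm / ρ ^ (k + 1) * x i ≤ ε * θm / ρ ^ k * x (i + 1) := by
          have heq : ε * θm / ρ ^ (k + 1) * (ρ * x (i + 1)) =
              ε * θm / ρ ^ k * x (i + 1) := by
            field_simp
            ring
          calc ε * θm / ρ ^ (k + 1) * x i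
              ≤ ε * θm / ρ ^ (k + 1) * (ρ * x (i + 1)) := by
                apply mul_le_mul_of_nonneg_left hxip
                positivity
            _ = ε * θm / ρ ^ k * x (i + 1) := heq
        linarith
  -- conclusion
  rw [ge_iff_le]
  set Stot : ℝ := ∑ j ∈ Finset.Icc 1 n,
      (1 + p j * ((n:ℝ) - (j:ℝ))) * s (j + 1) * f j (x j) with hStot
  have hStotnn : 0 ≤ Stot := Finset.sum_nonneg hTnn
  have hxbound : ∀ i ∈ Finset.Icc 1 n, C0 * x i ≤ Stot := by
    intro i hi
    simp only [Finset.mem_Icc] at hi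
    have hmain := main (n - i) i (by omega) hi.1
    have hsub : ∑ j ∈ Finset.Icc i n, (1 + p j * ((n:ℝ) - (j:ℝ))) * s (j + 1) * f j (x j)
        ≤ Stot := by
      rw [hStot]
      apply Finset.sum_le_sum_of_subset_of_nonneg
      · intro j hj
        simp only [Finset.mem_Icc] at hj ⊢
        omega
      · intro j hj _
        exact hTnn j hj
    have hxi := hx i (by simp only [Finset.mem_Icc]; omega)
    rw [Set.mem_Ioc] at hxi
    have hpowle : ρ ^ (n - i) ≤ ρ ^ n := pow_le_pow_right₀ (by linarith) (by omega)
    have hρni : (0:ℝ) < ρ ^ (n - i) := by positivity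
    have hCle : C0 ≤ ε * θm / ρ ^ (n - i) := by
      rw [hC0]
      apply div_le_div_of_nonneg_left (by positivity) hρni hpowle
    calc C0 * x i ≤ ε * θm / ρ ^ (n - i) * x i :=
          mul_le_mul_of_nonneg_right hCle hxi.1.le
      _ ≤ _ := hmain
      _ ≤ Stot := hsub
  have hsum : ∑ i ∈ Finset.Icc 1 n, ((n:ℝ) + 1 - (i:ℝ)) * x i ≤
      (n:ℝ) * ((n:ℝ) * (Stot / C0)) := by
    have hcard : (Finset.Icc 1 n).card = n := by
      rw [Nat.card_Icc]; omega
    calc ∑ i ∈ Finset.Icc 1 n, ((n:ℝ) + 1 - (i:ℝ)) * x i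
        ≤ ∑ i ∈ Finset.Icc 1 n, (n:ℝ) * (Stot / C0) := by
          apply Finset.sum_le_sum
          intro i hi
          simp only [Finset.mem_Icc] at hi
          have hxi := hx i (by simp only [Finset.mem_Icc]; omega)
          rw [Set.mem_Ioc] at hxi
          have hcoef : (n:ℝ) + 1 - (i:ℝ) ≤ (n:ℝ) := by
            have : (1:ℝ) ≤ (i:ℝ) := by exact_mod_cast hi.1
            linarith
          have hxval : x i ≤ Stot / C0 := by
            rw [le_div_iff₀ hC0pos]
            have := hxbound i (by simp only [Finset.mem_Icc]; omega)
            linarith [this]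
          have hcoefnn : 0 ≤ (n:ℝ) + 1 - (i:ℝ) := by
            have : (i:ℝ) ≤ (n:ℝ) := by exact_mod_cast hi.2
            linarith
          calc ((n:ℝ) + 1 - (i:ℝ)) * x i ≤ ((n:ℝ) + 1 - (i:ℝ)) * (Stot / C0) :=
                mul_le_mul_of_nonneg_left hxval hcoefnn
            _ ≤ (n:ℝ) * (Stot / C0) :=
                mul_le_mul_of_nonneg_right hcoef (by positivity)
      _ = (n:ℝ) * ((n:ℝ) * (Stot / C0)) := by
          rw [Finset.sum_const, hcard]
          push_cast
          ring
  calc C0 / ((n:ℝ) * n) * ∑ i ∈ Finset.Icc 1 n, ((n:ℝ) + 1 - (i:ℝ)) * x i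
      ≤ C0 / ((n:ℝ) * n) * ((n:ℝ) * ((n:ℝ) * (Stot / C0))) := by
        apply mul_le_mul_of_nonneg_left hsum
        positivity
    _ = Stot := by
        field_simp
    _ = _ := rfl
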